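/- Let c ≥ 0, μ > 0, let a < b be real numbers, and let p : (a, b) → ℝ be nonnegative, bounded, differentiable with p' ≤ 0 on (a, b) and with z ↦ μ p(z) p'(z) differentiable on (a, b). Suppose −c p'(z) − μ (p(z) p'(z))'(z) = h(z) on (a, b), where h : (a, b) → ℝ is nonnegative and bounded. Then for every z* ∈ (a, b) the function z ↦ μ p(z) (p'(z))² is (improperly) integrable on (z*, b), i.e. ∫_{z*}^{b} μ p(z) (p'(z))² dz < ∞. -/

import Mathlib

open Set MeasureTheory
open Filter Topology

/-- Local energy estimate: if `p` is nonnegative, bounded,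
differentiable with `p' ≤ 0` on `(a, b)` and solves
`−c p' − μ (p p')' = h` with `h ≥ 0` bounded, then the weighted energy
`μ p (p')²` is integrable on `(z*, b)` for every `z* ∈ (a, b)`. -/
theorem stmt3
    (c μ : ℝ) (hc : 0 ≤ c) (hμ : 0 < μ)
    (a b : ℝ) (hab : a < b)
    (p h : ℝ → ℝ)
    (hpnn : ∀ z ∈ Ioo a b, 0 ≤ p z)
    (hpbd : ∃ C : ℝ, ∀ z ∈ Ioo a b, p z ≤ C)
    (hpd : ∀ z ∈ Ioo a b, DifferentiableAt ℝ p z)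
    (hp' : ∀ z ∈ Ioo a b, deriv p z ≤ 0)
    (hud : ∀ z ∈ Ioo a b, DifferentiableAt ℝ (fun w => μ * p w * deriv p w) z)
    (heq : ∀ z ∈ Ioo a b,
      -c * deriv p z - deriv (fun w => μ * p w * deriv p w) z = h z)
    (hhnn : ∀ z ∈ Ioo a b, 0 ≤ h z)
    (hhbd : ∃ C : ℝ, ∀ z ∈ Ioo a b, h z ≤ C) :
    ∀ zs ∈ Ioo a b,
      IntegrableOn (fun z => μ * p z * (deriv p z) ^ 2) (Ioo zs b) := by
  obtain ⟨Cp, hCp⟩ := hpbd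
  obtain ⟨Ch, hCh⟩ := hhbd
  have hmid : (a + b) / 2 ∈ Ioo a b := ⟨by linarith, by linarith⟩
  have hCp0 : 0 ≤ Cp := le_trans (hpnn _ hmid) (hCp _ hmid)
  have hCh0 : 0 ≤ Ch := le_trans (hhnn _ hmid) (hCh _ hmid)
  set K : ℝ := Cp * Ch with hK
  have hK0 : 0 ≤ K := mul_nonneg hCp0 hCh0
  set u : ℝ → ℝ := fun w => μ * p w * deriv p w with hu
  set G : ℝ → ℝ := fun z => p z * u z + K * z with hG
  set g' : ℝ → ℝ := fun z =>
    deriv p z * u z + p z * (-c * deriv p z - h z) + K with hg'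
  -- G has derivative g' on Ioo a b
  have hGd : ∀ z ∈ Ioo a b, HasDerivAt G (g' z) z := by
    intro z hz
    have h1 : HasDerivAt p (deriv p z) z := (hpd z hz).hasDerivAt
    have h2 : HasDerivAt u (deriv u z) z := (hud z hz).hasDerivAt
    have h3 : HasDerivAt (fun y => K * y) K z := by
      simpa using (hasDerivAt_id z).const_mul K
    have h4 := (h1.mul h2).add h3
    have h5 : deriv u z = -c * deriv p z - h z := by
      have := heq z hz
      simp only [hu] at this ⊢
      linarith
    have h6 : G = (p * u + fun y => K * y) := rfl
    rw [h6]
    simpa [hg', h5] using h4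
  -- g' is nonnegative on Ioo a b
  have hg'nn : ∀ z ∈ Ioo a b, 0 ≤ g' z := by
    intro z hz
    have hP := hpnn z hz
    have hD := hp' z hz
    have hH := hhnn z hz
    have hPC := hCp z hz
    have hHC := hCh z hz
    simp only [hg', hu, hK]
    nlinarith [mul_nonneg hP hH, mul_nonneg (mul_nonneg hμ.le hP) (sq_nonneg (deriv p z)),
      mul_nonneg (mul_nonneg hc hP) (neg_nonneg.2 hD)]
  -- the integrand is bounded by g' on Ioo a b
  have hle : ∀ z ∈ Ioo a b, μ * p z * (deriv p z) ^ 2 ≤ g' z := by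
    intro z hz
    have hP := hpnn z hz
    have hD := hp' z hz
    have hH := hhnn z hz
    have hPC := hCp z hz
    have hHC := hCh z hz
    simp only [hg', hu, hK]
    nlinarith [mul_nonneg hP hH, mul_nonneg (mul_nonneg hc hP) (neg_nonneg.2 hD)]
  intro zs hzs
  have hsub : Ioo zs b ⊆ Ioo a b := Ioo_subset_Ioo hzs.1.le le_rfl
  -- G is monotone on Ioo zs b
  have hGcont : ContinuousOn G (Ioo a b) := fun z hz => ((hGd z hz).continuousAt).continuousWithinAt
  have hGmono : MonotoneOn G (Ioo zs b) := by
    have : MonotoneOn G (Ioo a b) := by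
      apply monotoneOn_of_hasDerivWithinAt_nonneg (convex_Ioo a b) hGcont
      · intro x hx
        rw [interior_Ioo] at hx
        exact (hGd x hx).hasDerivWithinAt
      · intro x hx
        rw [interior_Ioo] at hx
        exact hg'nn x hx
    exact this.mono hsub
  -- G is bounded above on Ioo zs b
  have hGbdd : BddAbove (G '' Ioo zs b) := by
    refine ⟨K * b, ?_⟩
    rintro _ ⟨z, hz, rfl⟩
    have hz' := hsub hz
    have hP := hpnn z hz'
    have hD := hp' z hz'
    have h1 : p z * u z ≤ 0 := by
      simp only [hu]
      nlinarith [mul_nonneg (mul_nonneg hμ.le (mul_nonneg hP hP)) (neg_nonneg.2 hD)]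
    have h2 : K * z ≤ K * b := by nlinarith [hz.2]
    simp only [hG]; linarith
  have hne : (Ioo zs b).Nonempty := nonempty_Ioo.2 hzs.2
  set L : ℝ := sSup (G '' Ioo zs b) with hL
  have hGtendsto : Tendsto G (𝓝[<] b) (𝓝 L) :=
    MonotoneOn.tendsto_nhdsWithin_Ioo_left hne hGmono hGbdd
  -- the extension of G to [zs, b]
  set g : ℝ → ℝ := fun t => if t < b then G t else L with hgdef
  have hgG : ∀ x < b, g x = G x := fun x hx => by simp [hgdef, hx]
  have hgEq : ∀ x < b, g =ᶠ[𝓝 x] G := by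
    intro x hx
    filter_upwards [Iio_mem_nhds hx] with y hy
    exact hgG y hy
  have hgcont : ContinuousOn g (Icc zs b) := by
    intro x hx
    rcases lt_or_eq_of_le hx.2 with hxb | hxb
    · have hx' : x ∈ Ioo a b := ⟨lt_of_lt_of_le hzs.1 hx.1, hxb⟩
      have : ContinuousAt G x := (hGd x hx').continuousAt
      exact (this.congr (hgEq x hxb).symm).continuousWithinAt
    · subst hxb
      have h1 : Tendsto g (𝓝[<] x) (𝓝 L) := by
        refine hGtendsto.congr' ?_
        filter_upwards [self_mem_nhdsWithin] with y hy
        exact (hgG y hy).symm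
      have h2 : Tendsto g (𝓝[{x}] x) (𝓝 L) := by
        rw [nhdsWithin_singleton]
        have : g x = L := by simp [hgdef]
        simpa [this] using tendsto_pure_nhds g x |>.congr (fun _ => rfl) |> fun t => t
      have hgx : g x = L := by simp [hgdef]
      have hsub2 : Icc zs x ⊆ Iio x ∪ {x} := by
        intro y hy
        rcases lt_or_eq_of_le hy.2 with h | h
        · exact Or.inl h
        · exact Or.inr (by simp [h])
      refine ContinuousWithinAt.mono ?_ hsub2
      unfold ContinuousWithinAt
      rw [hgx, nhdsWithin_union, nhdsWithin_singleton]
      exact h1.sup (by simpa [hgx] using tendsto_pure_nhds g x)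
  -- g has derivative g' on Ioo zs b
  have hgd : ∀ x ∈ Ioo zs b, HasDerivAt g (g' x) x := by
    intro x hx
    exact (hGd x (hsub hx)).congr_of_eventuallyEq (hgEq x hx.2)
  have hint : IntegrableOn g' (Ioc zs b) :=
    intervalIntegral.integrableOn_deriv_of_nonneg hgcont hgd (fun x hx => hg'nn x (hsub hx))
  have hint' : IntegrableOn g' (Ioo zs b) := hint.mono_set Ioo_subset_Ioc_self
  -- measurability of the integrand
  have hmeas : AEStronglyMeasurable (fun z => μ * p z * (deriv p z) ^ 2)
      (volume.restrict (Ioo zs b)) := by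
    have hpc : ContinuousOn p (Ioo zs b) := fun z hz =>
      ((hpd z (hsub hz)).continuousAt).continuousWithinAt
    have h1 : AEMeasurable p (volume.restrict (Ioo zs b)) :=
      hpc.aemeasurable measurableSet_Ioo
    have h2 : AEMeasurable (deriv p) (volume.restrict (Ioo zs b)) :=
      (measurable_deriv p).aemeasurable
    exact ((aemeasurable_const.mul h1).mul (h2.pow_const 2)).aestronglyMeasurable
  refine hint'.mono' hmeas ?_
  rw [ae_restrict_iff' measurableSet_Ioo]
  refine ae_of_all _ fun z hz => ?_
  have hz' := hsub hz
  rw [Real.norm_eq_abs, abs_of_nonneg]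
  · exact hle z hz'
  · exact mul_nonneg (mul_nonneg hμ.le (hpnn z hz')) (sq_nonneg _)
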